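/- Let D : ℝⁿ → ℝ and g₁ : ℝ → ℝ be differentiable, and let c ∈ ℝ be a constant with g₁(D(x)) − c > 0 in a neighborhood of x. Define δ(x) = −ε∇_x |g₁(D(x)) − c|. Then the first-order expansion of the adversarially perturbed objective satisfies g₁(D(x)) + ∇_x g₁(D(x)) · δ(x) = g₁(D(x)) − ε (g₁'(D(x)))² ‖∇_x D(x)‖², i.e., adversarial training adds a gradient penalty −ε(g₁')²‖∇D‖². -/

import Mathlib

open MeasureTheory

/-- When `g₁(D(x)) − c > 0` near `x`, the DAT perturbation
`δ(x) = −ε ∇ₓ |g₁(D(x)) − c|` turns the first-order expansion of the perturbed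
objective into a 0-centered gradient penalty:
`g₁(D(x)) + ∇ₓ g₁(D(x)) · δ(x) = g₁(D(x)) − ε (g₁'(D(x)))² ‖∇ₓ D(x)‖²`. -/
theorem stmt_9 {n : ℕ} (D : EuclideanSpace ℝ (Fin n) → ℝ) (g₁ : ℝ → ℝ)
    (hD : Differentiable ℝ D) (hg₁ : Differentiable ℝ g₁)
    (c ε : ℝ) (hε : 0 < ε) (x : EuclideanSpace ℝ (Fin n))
    (hpos : ∀ᶠ y in nhds x, 0 < g₁ (D y) - c)
    (δ : EuclideanSpace ℝ (Fin n))
    (hδ : δ = -ε • gradient (fun y => |g₁ (D y) - c|) x) :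
    g₁ (D x) + (inner ℝ (gradient (fun y => g₁ (D y)) x) δ : ℝ)
      = g₁ (D x) - ε * (deriv g₁ (D x)) ^ 2 * ‖gradient D x‖ ^ 2 := by
  set g' := deriv g₁ (D x) with hg'
  have hfd : HasFDerivAt (fun y => g₁ (D y)) (g' • fderiv ℝ D x) x :=
    (hg₁ (D x)).hasDerivAt.comp_hasFDerivAt x (hD x).hasFDerivAt
  have hgradD : gradient D x
      = (InnerProductSpace.toDual ℝ (EuclideanSpace ℝ (Fin n))).symm (fderiv ℝ D x) := rfl
  have hGeq : gradient (fun y => g₁ (D y)) x = g' • gradient D x := by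
    rw [gradient, hfd.fderiv, hgradD]
    simp
  have habs : (fun y => |g₁ (D y) - c|) =ᶠ[nhds x] (fun y => g₁ (D y) - c) :=
    hpos.mono fun y hy => abs_of_pos hy
  have h1 : gradient (fun y => |g₁ (D y) - c|) x = gradient (fun y => g₁ (D y)) x := by
    rw [habs.gradient_eq]
    unfold gradient
    rw [fderiv_sub_const]
  rw [hδ, h1]
  rw [real_inner_smul_right, real_inner_self_eq_norm_sq, hGeq, norm_smul]
  simp only [Real.norm_eq_abs, mul_pow, sq_abs]
  ring
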